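/- For every real ρ > 0, ∫₀^{2π} e^{ρ sin θ} dθ ≤ 3π + 2√π·e^{ρ}/√ρ. -/

import Mathlib

open Real MeasureTheory intervalIntegral

/-- `cos u ≤ 1 - u²/4` for `|u| ≤ π/2`. -/
lemma cos_le_one_sub_sq_div_four {u : ℝ} (hu : |u| ≤ Real.pi / 2) :
    Real.cos u ≤ 1 - u ^ 2 / 4 := by
  wlog hu0 : 0 ≤ u with H
  · have := H (u := -u) (by rwa [abs_neg]) (by linarith [le_of_not_ge hu0])
    simpa using this
  rw [abs_of_nonneg hu0] at hu
  rcases eq_or_lt_of_le hu0 with h | h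
  · simp [← h]
  -- use 1 - cos u = 2 sin(u/2)^2 and sin x > x - x^3/4 for 0 < x ≤ 1
  have h2 : (0:ℝ) < u / 2 := by linarith
  have h3 : u / 2 ≤ 1 := by
    have : Real.pi ≤ 4 := by linarith [Real.pi_le_four]
    linarith
  have hs : u / 2 - (u / 2) ^ 3 / 4 < Real.sin (u / 2) := by
    have := Real.sin_gt_sub_cube h2; linarith [pow_pos h2 3]
  have hpos : 0 < u / 2 - (u / 2) ^ 3 / 4 := by
    have : (u/2)^3 ≤ (u/2) * 1 := by
      have : (u/2)^2 ≤ 1 := by nlinarith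
      nlinarith
    nlinarith
  have hsq : (u / 2 - (u / 2) ^ 3 / 4) ^ 2 ≤ Real.sin (u / 2) ^ 2 := by
    have := hs.le
    nlinarith [Real.sin_nonneg_of_nonneg_of_le_pi (x := u/2) (by linarith)
      (by linarith [Real.pi_gt_three])]
  have hid : Real.sin (u / 2) ^ 2 = 1 / 2 - Real.cos u / 2 := by
    have := Real.sin_sq_eq_half_sub (u / 2)
    simpa [mul_div_cancel₀] using this
  rw [hid] at hsq
  -- so cos u ≤ 1 - 2 (u/2 - (u/2)^3/4)^2; need that ≤ 1 - u^2/4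
  have hub : u ^ 2 ≤ 4 := by nlinarith [Real.pi_le_four, Real.pi_pos]
  nlinarith [hsq, mul_nonneg (mul_nonneg (sq_nonneg u)
    (by linarith : (0:ℝ) ≤ 4 - u ^ 2)) (by linarith : (0:ℝ) ≤ 28 - u ^ 2)]

/-- `sin θ ≤ 1 - (θ - π/2)²/4` for `θ ∈ [0, π]`. -/
lemma sin_le_one_sub_sq {θ : ℝ} (h0 : 0 ≤ θ) (h1 : θ ≤ Real.pi) :
    Real.sin θ ≤ 1 - (θ - Real.pi / 2) ^ 2 / 4 := by
  have : Real.sin θ = Real.cos (θ - Real.pi / 2) := by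
    rw [Real.cos_sub_pi_div_two]
  rw [this]
  exact cos_le_one_sub_sq_div_four (abs_le.2 ⟨by linarith, by linarith⟩)

/-- For every real `ρ > 0`, `∫₀^{2π} e^{ρ sin θ} dθ ≤ 3π + 2√π·e^{ρ}/√ρ`. -/
theorem integral_exp_mul_sin_le (ρ : ℝ) (hρ : 0 < ρ) :
    (∫ θ in (0:ℝ)..(2 * Real.pi), Real.exp (ρ * Real.sin θ))
      ≤ 3 * Real.pi + 2 * Real.sqrt Real.pi * Real.exp ρ / Real.sqrt ρ := by
  have hπ := Real.pi_pos
  have hcont : Continuous fun θ : ℝ => Real.exp (ρ * Real.sin θ) := by continuity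
  have hInt : ∀ a b : ℝ, IntervalIntegrable (fun θ => Real.exp (ρ * Real.sin θ)) volume a b :=
    fun a b => hcont.intervalIntegrable a b
  -- split the integral
  have hsplit : (∫ θ in (0:ℝ)..(2 * Real.pi), Real.exp (ρ * Real.sin θ))
      = (∫ θ in (0:ℝ)..Real.pi, Real.exp (ρ * Real.sin θ))
        + ∫ θ in Real.pi..(2 * Real.pi), Real.exp (ρ * Real.sin θ) :=
    (integral_add_adjacent_intervals (hInt 0 Real.pi) (hInt Real.pi (2 * Real.pi))).symm
  -- second piece ≤ π
  have hI2 : (∫ θ in Real.pi..(2 * Real.pi), Real.exp (ρ * Real.sin θ)) ≤ Real.pi := by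
    have hone : (∫ θ in Real.pi..(2 * Real.pi), (1:ℝ)) = Real.pi := by
      simp; ring
    refine le_trans ?_ hone.le
    apply integral_mono_on (by linarith) (hInt _ _) (intervalIntegrable_const)
    intro θ hθ
    have hsin : Real.sin θ ≤ 0 := by
      have : Real.sin (θ - Real.pi) ≥ 0 :=
        Real.sin_nonneg_of_nonneg_of_le_pi (by linarith [hθ.1]) (by linarith [hθ.2])
      have hrw : Real.sin θ = -Real.sin (θ - Real.pi) := by
        rw [← Real.sin_add_pi (θ - Real.pi)] at *
        ring_nf
      rw [hrw]; linarith
    calc Real.exp (ρ * Real.sin θ) ≤ Real.exp 0 :=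
          Real.exp_le_exp.2 (by nlinarith)
      _ = 1 := Real.exp_zero
  -- first piece ≤ e^ρ * ∫ gaussian
  set b : ℝ := ρ / 4 with hb
  have hbpos : 0 < b := by positivity
  have hgauss_int : Integrable (fun x : ℝ => Real.exp (-b * x ^ 2)) := integrable_exp_neg_mul_sq hbpos
  have hshift_int : Integrable (fun x : ℝ => Real.exp (-b * (x - Real.pi / 2) ^ 2)) := by
    have := hgauss_int.comp_sub_right (Real.pi / 2)
    simpa using this
  have hI1 : (∫ θ in (0:ℝ)..Real.pi, Real.exp (ρ * Real.sin θ))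
      ≤ Real.exp ρ * Real.sqrt (Real.pi / b) := by
    have step1 : (∫ θ in (0:ℝ)..Real.pi, Real.exp (ρ * Real.sin θ))
        ≤ ∫ θ in (0:ℝ)..Real.pi, Real.exp ρ * Real.exp (-b * (θ - Real.pi / 2) ^ 2) := by
      apply integral_mono_on (le_of_lt hπ) (hInt _ _)
      · exact (Continuous.intervalIntegrable (by continuity) _ _)
      · intro θ hθ
        rw [← Real.exp_add]
        apply Real.exp_le_exp.2
        have := sin_le_one_sub_sq hθ.1 hθ.2
        have h4 : ρ * Real.sin θ ≤ ρ * (1 - (θ - Real.pi / 2) ^ 2 / 4) :=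
          mul_le_mul_of_nonneg_left this (le_of_lt hρ)
        rw [hb]; nlinarith
    have step2 : (∫ θ in (0:ℝ)..Real.pi, Real.exp ρ * Real.exp (-b * (θ - Real.pi / 2) ^ 2))
        = Real.exp ρ * ∫ θ in (0:ℝ)..Real.pi, Real.exp (-b * (θ - Real.pi / 2) ^ 2) := by
      rw [← intervalIntegral.integral_const_mul]
    have step3 : (∫ θ in (0:ℝ)..Real.pi, Real.exp (-b * (θ - Real.pi / 2) ^ 2))
        ≤ Real.sqrt (Real.pi / b) := by
      rw [intervalIntegral.integral_of_le (le_of_lt hπ)]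
      have hle : (∫ θ in Set.Ioc (0:ℝ) Real.pi, Real.exp (-b * (θ - Real.pi / 2) ^ 2))
          ≤ ∫ θ : ℝ, Real.exp (-b * (θ - Real.pi / 2) ^ 2) :=
        setIntegral_le_integral hshift_int
          (Filter.Eventually.of_forall fun x => (Real.exp_pos _).le)
      have heq : (∫ θ : ℝ, Real.exp (-b * (θ - Real.pi / 2) ^ 2))
          = ∫ θ : ℝ, Real.exp (-b * θ ^ 2) :=
        MeasureTheory.integral_sub_right_eq_self (fun x => Real.exp (-b * x ^ 2)) (Real.pi / 2)
      rw [heq, integral_gaussian] at hle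
      exact hle
    calc (∫ θ in (0:ℝ)..Real.pi, Real.exp (ρ * Real.sin θ))
        ≤ ∫ θ in (0:ℝ)..Real.pi, Real.exp ρ * Real.exp (-b * (θ - Real.pi / 2) ^ 2) := step1
      _ = Real.exp ρ * ∫ θ in (0:ℝ)..Real.pi, Real.exp (-b * (θ - Real.pi / 2) ^ 2) := step2
      _ ≤ Real.exp ρ * Real.sqrt (Real.pi / b) :=
          mul_le_mul_of_nonneg_left step3 (Real.exp_pos ρ).le
  -- compute √(π/b) = 2√π/√ρ
  have hsq : Real.sqrt (Real.pi / b) = 2 * Real.sqrt Real.pi / Real.sqrt ρ := by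
    rw [hb, show Real.pi / (ρ / 4) = 4 * Real.pi / ρ by field_simp,
      Real.sqrt_div (by positivity), Real.sqrt_mul (by norm_num : (0:ℝ) ≤ 4),
      show Real.sqrt 4 = 2 by
        rw [show (4:ℝ) = 2 ^ 2 by norm_num, Real.sqrt_sq (by norm_num)]]
  have hI1' : (∫ θ in (0:ℝ)..Real.pi, Real.exp (ρ * Real.sin θ))
      ≤ 2 * Real.sqrt Real.pi * Real.exp ρ / Real.sqrt ρ := by
    calc (∫ θ in (0:ℝ)..Real.pi, Real.exp (ρ * Real.sin θ))
        ≤ Real.exp ρ * Real.sqrt (Real.pi / b) := hI1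
      _ = 2 * Real.sqrt Real.pi * Real.exp ρ / Real.sqrt ρ := by rw [hsq]; ring
  rw [hsplit]
  linarith [hI1', hI2]
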